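/- arXiv:2105.07188 — 7 statements merged into one kernel-verified Lean document; each statement's English description precedes it below -/
import Mathlib

section
/- Let α ∈ (0, π/2), θ_d ∈ ℝ, L_d > 0, and ε > 0. Define A = ε²(θ_d² − cos α), B = ε·√(ε²(θ_d² − cos α)² + L_d²), C = A/B, ω̃ = 1 − (1/2)ε²θ_d², and the stance radial motion L(t) = 1 − ε L_d sin(ε⁻¹ ω̃ t) + ε²(θ_d² − cos α)(1 − cos(ε⁻¹ ω̃ t)). Assume ω̃ > 0 and set t_C = (2ε/ω̃)·arccos(C). Then L(0) = 1 and L(t_C) = 1. -/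
open Real

/-- The approximate radial stance motion has rest length `1` at touch-down
(`t = 0`) and at take-off (`t = t_C`). -/
theorem radial_motion_endpoints
    (α θd Ld ε : ℝ)
    (hα : α ∈ Set.Ioo 0 (Real.pi / 2)) (hLd : 0 < Ld) (hε : 0 < ε)
    (A B C ω t_C : ℝ) (L : ℝ → ℝ)
    (hA : A = ε ^ 2 * (θd ^ 2 - Real.cos α))
    (hB : B = ε * Real.sqrt (ε ^ 2 * (θd ^ 2 - Real.cos α) ^ 2 + Ld ^ 2))
    (hC : C = A / B)
    (hω : ω = 1 - (1 / 2) * ε ^ 2 * θd ^ 2)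
    (hωpos : 0 < ω)
    (hL : ∀ t, L t = 1 - ε * Ld * Real.sin (ε⁻¹ * ω * t)
        + ε ^ 2 * (θd ^ 2 - Real.cos α) * (1 - Real.cos (ε⁻¹ * ω * t)))
    (htC : t_C = (2 * ε / ω) * Real.arccos C) :
    L 0 = 1 ∧ L t_C = 1 := by
  have hBpos : 0 < B := by
    rw [hB]
    have : 0 < Real.sqrt (ε ^ 2 * (θd ^ 2 - Real.cos α) ^ 2 + Ld ^ 2) :=
      Real.sqrt_pos.mpr (by positivity)
    positivity
  have hB2 : B ^ 2 = A ^ 2 + ε ^ 2 * Ld ^ 2 := by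
    rw [hA, hB, mul_pow, Real.sq_sqrt (by positivity)]
    ring
  have hC2 : C ^ 2 ≤ 1 := by
    rw [hC, div_pow]
    rw [div_le_one (by positivity)]
    nlinarith [sq_nonneg ε, sq_nonneg Ld, hB2]
  have hC1 : -1 ≤ C := by nlinarith
  have hC1' : C ≤ 1 := by nlinarith
  have hcos : Real.cos (Real.arccos C) = C := Real.cos_arccos hC1 hC1'
  have hsq : 1 - C ^ 2 = (ε * Ld / B) ^ 2 := by
    rw [hC]
    field_simp
    nlinarith [hB2]
  have hsin : Real.sin (Real.arccos C) = ε * Ld / B := by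
    rw [Real.sin_arccos, hsq, Real.sqrt_sq (by positivity)]
  constructor
  · rw [hL 0]; simp
  · have harg : ε⁻¹ * ω * t_C = 2 * Real.arccos C := by
      rw [htC]
      field_simp
    rw [hL t_C, harg, Real.sin_two_mul, Real.cos_two_mul, hcos, hsin, ← hA]
    have hBne : B ≠ 0 := ne_of_gt hBpos
    have hCB : C * B = A := by rw [hC]; field_simp
    field_simp
    linear_combination 2 * C * hB2 - (2 * B + 2 * A * C) * hCB
end

section
/- Let α ∈ (0, π/2), θ_d ∈ ℝ, L_d > 0, and ε > 0. Define A = ε²(θ_d² − cos α), B = ε·√(ε²(θ_d² − cos α)² + L_d²), C = A/B, ω̃ = 1 − (1/2)ε²θ_d², L(t) = 1 − ε L_d sin(ε⁻¹ ω̃ t) + ε²(θ_d² − cos α)(1 − cos(ε⁻¹ ω̃ t)), and t_C = (2ε/ω̃)·arccos(C), assuming ω̃ > 0. Then the value of L at the midpoint of the contact phase is L(t_C/2) = 1 + A − B; that is, the maximum leg deflection during stance equals ΔL_MAX = B − A. -/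
open Real

/-- At the midpoint of the contact phase the approximate radial stance motion attains
the value `1 + A - B`, i.e. the maximum leg deflection during stance is `B - A`. -/
theorem radial_motion_midpoint
    (α θd Ld ε : ℝ)
    (hα : α ∈ Set.Ioo 0 (Real.pi / 2)) (hLd : 0 < Ld) (hε : 0 < ε)
    (A B C ω t_C : ℝ) (L : ℝ → ℝ)
    (hA : A = ε ^ 2 * (θd ^ 2 - Real.cos α))
    (hB : B = ε * Real.sqrt (ε ^ 2 * (θd ^ 2 - Real.cos α) ^ 2 + Ld ^ 2))
    (hC : C = A / B)
    (hω : ω = 1 - (1 / 2) * ε ^ 2 * θd ^ 2)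
    (hωpos : 0 < ω)
    (hL : ∀ t, L t = 1 - ε * Ld * Real.sin (ε⁻¹ * ω * t)
        + ε ^ 2 * (θd ^ 2 - Real.cos α) * (1 - Real.cos (ε⁻¹ * ω * t)))
    (htC : t_C = (2 * ε / ω) * Real.arccos C) :
    L (t_C / 2) = 1 + A - B ∧ 1 - L (t_C / 2) = B - A := by
  have hnn : 0 ≤ ε ^ 2 * (θd ^ 2 - Real.cos α) ^ 2 + Ld ^ 2 := by positivity
  have hs : 0 < Real.sqrt (ε ^ 2 * (θd ^ 2 - Real.cos α) ^ 2 + Ld ^ 2) := by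
    apply Real.sqrt_pos.2; nlinarith
  have hssq : Real.sqrt (ε ^ 2 * (θd ^ 2 - Real.cos α) ^ 2 + Ld ^ 2) ^ 2
      = ε ^ 2 * (θd ^ 2 - Real.cos α) ^ 2 + Ld ^ 2 := Real.sq_sqrt hnn
  have hBpos : 0 < B := by rw [hB]; positivity
  have hBsq : B ^ 2 = A ^ 2 + ε ^ 2 * Ld ^ 2 := by
    rw [hA, hB, mul_pow, hssq]; ring
  have hC1 : -1 ≤ C := by
    rw [hC, le_div_iff₀ hBpos]; nlinarith
  have hC2 : C ≤ 1 := by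
    rw [hC, div_le_iff₀ hBpos]; nlinarith
  have harg : ε⁻¹ * ω * (t_C / 2) = Real.arccos C := by
    rw [htC]; field_simp
  have hcos : Real.cos (ε⁻¹ * ω * (t_C / 2)) = C := by
    rw [harg, Real.cos_arccos hC1 hC2]
  have hsqrt : Real.sqrt (1 - C ^ 2) = ε * Ld / B := by
    have h1 : 1 - C ^ 2 = (ε * Ld / B) ^ 2 := by
      rw [hC]; field_simp; nlinarith
    rw [h1, Real.sqrt_sq (by positivity)]
  have hsin : Real.sin (ε⁻¹ * ω * (t_C / 2)) = ε * Ld / B := by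
    rw [harg, Real.sin_arccos, hsqrt]
  have key : L (t_C / 2) = 1 + A - B := by
    rw [hL, hsin, hcos, hC, ← hA]
    field_simp
    linear_combination hBsq
  exact ⟨key, by rw [key]; ring⟩
end

section
/- Let α ∈ (0, π/2), θ_d ∈ ℝ, L_d > 0. For ε > 0 define C(ε) = ε(θ_d² − cos α)/√(ε²(θ_d² − cos α)² + L_d²) and Δθ(ε) = 2εθ_d·[arccos(C(ε)) + 2ε L_d (1 − C(ε)²)] − 2ε² sin α · (arccos(C(ε)))². Then, as ε → 0⁺, Δθ(ε) = π θ_d ε + [4θ_d L_d − 2(θ_d/L_d)(θ_d² − cos α) − (1/2)π² sin α]·ε² + O(ε³); that is, the function ε ↦ Δθ(ε) − π θ_d ε − [4θ_d L_d − 2(θ_d/L_d)(θ_d² − cos α) − (1/2)π² sin α]ε² is O(ε³) as ε → 0 from the right. -/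
open Real Filter Asymptotics

lemma arcsin_sub_self_bound {x : ℝ} (hx : |x| ≤ 1/2) :
    |Real.arcsin x - x| ≤ |x|^3 := by
  set s : Set ℝ := Set.Icc (-|x|) |x| with hs
  have hmem : ∀ t ∈ s, |t| ≤ 1/2 := by
    rintro t ⟨h1, h2⟩
    rw [abs_le]; constructor <;> nlinarith [abs_nonneg x]
  have key : ∀ t ∈ s, HasDerivWithinAt (fun y => Real.arcsin y - y)
      (1 / Real.sqrt (1 - t^2) - 1) s t := by
    intro t ht
    have h := hmem t ht
    have h1 : t ≠ -1 := by intro h'; rw [h'] at h; norm_num at h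
    have h2 : t ≠ 1 := by intro h'; rw [h'] at h; norm_num at h
    exact ((Real.hasDerivAt_arcsin h1 h2).sub (hasDerivAt_id t)).hasDerivWithinAt
  have bound : ∀ t ∈ s, ‖1 / Real.sqrt (1 - t^2) - 1‖ ≤ x^2 := by
    intro t ht
    have htx : |t| ≤ |x| := by
      obtain ⟨h1, h2⟩ := ht; rw [abs_le]; exact ⟨h1, h2⟩
    have h := hmem t ht
    have ht2 : t^2 ≤ 1/4 := by nlinarith [abs_nonneg t, sq_abs t]
    have hpos : (0:ℝ) < Real.sqrt (1 - t^2) := Real.sqrt_pos.2 (by nlinarith)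
    have hsq : Real.sqrt (1 - t^2) ^ 2 = 1 - t^2 := Real.sq_sqrt (by nlinarith)
    have hle1 : Real.sqrt (1 - t^2) ≤ 1 := by
      nlinarith [hpos]
    have hge : 1 ≤ 1 / Real.sqrt (1 - t^2) := by
      rw [le_div_iff₀ hpos]; linarith
    have hub : 1 / Real.sqrt (1 - t^2) ≤ 1 + t^2 := by
      rw [div_le_iff₀ hpos]
      nlinarith [hpos, hsq, sq_nonneg (Real.sqrt (1 - t^2) * (1 + t^2) - 1)]
    have htx2 : t^2 ≤ x^2 := by nlinarith [sq_abs t, sq_abs x, abs_nonneg t, abs_nonneg x]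
    rw [Real.norm_eq_abs, abs_le]
    constructor <;> nlinarith [sq_nonneg x]
  have h0 : (0:ℝ) ∈ s := by constructor <;> simp [abs_nonneg]
  have hxs : x ∈ s := by constructor <;> [exact neg_abs_le x; exact le_abs_self x]
  have := Convex.norm_image_sub_le_of_norm_hasDerivWithin_le key bound (convex_Icc _ _) h0 hxs
  simpa [Real.norm_eq_abs, abs_mul, pow_succ, sq_abs, mul_comm] using this

set_option maxHeartbeats 2000000 in
/-- Second-order Taylor expansion of the angle swept during stance as `ε → 0⁺`. -/
theorem angle_swept_expansion
    (α θd Ld : ℝ)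
    (hα : α ∈ Set.Ioo 0 (Real.pi / 2)) (hLd : 0 < Ld)
    (C Δθ : ℝ → ℝ)
    (hC : ∀ ε : ℝ, C ε = ε * (θd ^ 2 - Real.cos α)
        / Real.sqrt (ε ^ 2 * (θd ^ 2 - Real.cos α) ^ 2 + Ld ^ 2))
    (hΔθ : ∀ ε : ℝ, Δθ ε = 2 * ε * θd * (Real.arccos (C ε) + 2 * ε * Ld * (1 - (C ε) ^ 2))
        - 2 * ε ^ 2 * Real.sin α * (Real.arccos (C ε)) ^ 2) :
    (fun ε : ℝ => Δθ ε - Real.pi * θd * ε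
        - (4 * θd * Ld - 2 * (θd / Ld) * (θd ^ 2 - Real.cos α)
            - (1 / 2) * Real.pi ^ 2 * Real.sin α) * ε ^ 2)
      =O[nhdsWithin 0 (Set.Ioi 0)] (fun ε : ℝ => ε ^ 3) := by
  set a : ℝ := θd ^ 2 - Real.cos α with ha
  set b : ℝ := a / Ld with hb
  set cb : ℝ := |b| with hcb
  have hcb0 : 0 ≤ cb := abs_nonneg _
  set c : ℝ := cb + 2 * cb ^ 3 with hc
  have hc0 : 0 ≤ c := by positivity
  set M : ℝ := 4 * |θd| * cb ^ 3 + 4 * |θd| * Ld * cb ^ 2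
      + 2 * Real.pi * c + 2 * c ^ 2 with hM
  have hsin : |Real.sin α| ≤ 1 := abs_le.2 ⟨Real.neg_one_le_sin α, Real.sin_le_one α⟩
  have hab : |a| = cb * Ld := by
    rw [hcb, hb, abs_div, abs_of_pos hLd]
    field_simp
  have hδpos : (0:ℝ) < min 1 (1 / (2 * (cb + 1))) := by positivity
  rw [isBigO_iff]
  refine ⟨M, ?_⟩
  filter_upwards [Ioo_mem_nhdsGT_of_mem (Set.left_mem_Ico.2 hδpos)] with ε hε
  obtain ⟨hε0, hεδ⟩ := hε
  have hε1 : ε ≤ 1 := le_of_lt (lt_of_lt_of_le hεδ (min_le_left _ _))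
  have hε2 : ε < 1 / (2 * (cb + 1)) := lt_of_lt_of_le hεδ (min_le_right _ _)
  set S : ℝ := Real.sqrt (ε ^ 2 * a ^ 2 + Ld ^ 2) with hSdef
  have hSge : Ld ≤ S := by
    rw [hSdef]
    have h1 : Ld = Real.sqrt (Ld ^ 2) := (Real.sqrt_sq hLd.le).symm
    rw [h1]
    exact Real.sqrt_le_sqrt (by nlinarith [sq_nonneg (ε * a)])
  have hS0 : (0:ℝ) < S := lt_of_lt_of_le hLd hSge
  have hSle : S ≤ Ld + ε ^ 2 * a ^ 2 / (2 * Ld) := by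
    have key : (Ld + ε ^ 2 * a ^ 2 / (2 * Ld)) ^ 2
        = Ld ^ 2 + ε ^ 2 * a ^ 2 + (ε ^ 2 * a ^ 2) ^ 2 / (4 * Ld ^ 2) := by
      field_simp
      ring
    have h2 : ε ^ 2 * a ^ 2 + Ld ^ 2 ≤ (Ld + ε ^ 2 * a ^ 2 / (2 * Ld)) ^ 2 := by
      rw [key]
      have := div_nonneg (sq_nonneg (ε ^ 2 * a ^ 2)) (by positivity : (0:ℝ) ≤ 4 * Ld ^ 2)
      linarith
    calc S ≤ Real.sqrt ((Ld + ε ^ 2 * a ^ 2 / (2 * Ld)) ^ 2) := Real.sqrt_le_sqrt h2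
      _ = Ld + ε ^ 2 * a ^ 2 / (2 * Ld) := Real.sqrt_sq (by positivity)
  have hCb : |C ε| ≤ cb * ε := by
    rw [hC ε, ← hSdef, abs_div, abs_of_pos hS0, abs_mul, abs_of_pos hε0]
    calc ε * |a| / S ≤ ε * |a| / Ld :=
          div_le_div_of_nonneg_left (by positivity) hLd hSge
      _ = cb * ε := by rw [hab]; field_simp
  have hChalf : |C ε| ≤ 1 / 2 := by
    have h1 : cb * ε ≤ cb / (2 * (cb + 1)) := by
      rw [div_eq_mul_inv, ← one_div]
      exact mul_le_mul_of_nonneg_left hε2.le hcb0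
    have h2 : cb / (2 * (cb + 1)) ≤ 1 / 2 := by
      rw [div_le_div_iff₀ (by positivity) (by norm_num)]
      nlinarith
    linarith [hCb]
  have hr : |Real.arcsin (C ε) - C ε| ≤ |C ε| ^ 3 := arcsin_sub_self_bound hChalf
  have ha2 : a ^ 2 = cb ^ 2 * Ld ^ 2 := by
    rw [← sq_abs a, hab]; ring
  have hCsub : C ε - b * ε = ε * a * (Ld - S) / (S * Ld) := by
    rw [hC ε, ← hSdef, hb]
    field_simp
  have hSle2 : S - Ld ≤ ε ^ 2 * cb ^ 2 * Ld / 2 := by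
    have : ε ^ 2 * a ^ 2 / (2 * Ld) = ε ^ 2 * cb ^ 2 * Ld / 2 := by
      rw [ha2]; field_simp
    rw [this] at hSle
    linarith
  have hsb : |C ε - b * ε| ≤ cb ^ 3 * ε ^ 3 := by
    rw [hCsub, abs_div, abs_mul, abs_mul, abs_of_pos hε0,
      abs_sub_comm Ld S, abs_of_nonneg (sub_nonneg.2 hSge), abs_of_pos (mul_pos hS0 hLd), hab,
      div_le_iff₀ (mul_pos hS0 hLd)]
    calc ε * (cb * Ld) * (S - Ld) ≤ ε * (cb * Ld) * (ε ^ 2 * cb ^ 2 * Ld / 2) :=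
          mul_le_mul_of_nonneg_left hSle2 (by positivity)
      _ = cb ^ 3 * ε ^ 3 * Ld ^ 2 / 2 := by ring
      _ ≤ cb ^ 3 * ε ^ 3 * (S * Ld) := by
          linarith [mul_nonneg (mul_nonneg (pow_nonneg hcb0 3) (pow_pos hε0 3).le)
            (mul_nonneg hLd.le (sub_nonneg.2 hSge)),
            mul_nonneg (mul_nonneg (pow_nonneg hcb0 3) (pow_pos hε0 3).le) (sq_nonneg Ld)]
  set u : ℝ := Real.arcsin (C ε) - b * ε with hu_def
  have hC3 : |C ε| ^ 3 ≤ cb ^ 3 * ε ^ 3 := by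
    calc |C ε| ^ 3 ≤ (cb * ε) ^ 3 := pow_le_pow_left₀ (abs_nonneg _) hCb 3
      _ = cb ^ 3 * ε ^ 3 := by ring
  have hu : |u| ≤ 2 * cb ^ 3 * ε ^ 3 := by
    have : u = (Real.arcsin (C ε) - C ε) + (C ε - b * ε) := by rw [hu_def]; ring
    rw [this]
    calc |(Real.arcsin (C ε) - C ε) + (C ε - b * ε)|
        ≤ |Real.arcsin (C ε) - C ε| + |C ε - b * ε| := abs_add_le _ _
      _ ≤ cb ^ 3 * ε ^ 3 + cb ^ 3 * ε ^ 3 := by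
          have := hr.trans hC3
          linarith
      _ = 2 * cb ^ 3 * ε ^ 3 := by ring
  have hC2 : (C ε) ^ 2 ≤ cb ^ 2 * ε ^ 2 := by
    have h1 := pow_le_pow_left₀ (abs_nonneg (C ε)) hCb 2
    have h2 : |C ε| ^ 2 = (C ε) ^ 2 := sq_abs _
    linarith [h1, h2.symm.le, h2.le]
  have harccos : Real.arccos (C ε) = Real.pi / 2 - (b * ε + u) := by
    rw [Real.arccos_eq_pi_div_two_sub_arcsin]
    rw [hu_def]; ring
  have hiden : Δθ ε - Real.pi * θd * ε
      - (4 * θd * Ld - 2 * (θd / Ld) * a - (1 / 2) * Real.pi ^ 2 * Real.sin α) * ε ^ 2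
      = -(2 * ε * θd * u) - 4 * ε ^ 2 * θd * Ld * (C ε) ^ 2
        + 2 * ε ^ 2 * Real.sin α * (Real.pi * (b * ε + u) - (b * ε + u) ^ 2) := by
    rw [hΔθ ε, harccos, hb]
    ring
  have hε4 : ε ^ 4 ≤ ε ^ 3 := pow_le_pow_of_le_one hε0.le hε1 (by norm_num)
  have hv : |b * ε + u| ≤ c * ε := by
    have hbε : |b * ε| = cb * ε := by rw [abs_mul, abs_of_pos hε0, hcb]
    have hε3 : ε ^ 3 ≤ ε := by nlinarith
    calc |b * ε + u| ≤ |b * ε| + |u| := abs_add_le _ _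
      _ ≤ cb * ε + 2 * cb ^ 3 * ε ^ 3 := by rw [hbε]; linarith
      _ ≤ cb * ε + 2 * cb ^ 3 * ε := by
          linarith [mul_nonneg (pow_nonneg hcb0 3) (sub_nonneg.2 hε3)]
      _ = c * ε := by rw [hc]; ring
  have h1 : |-(2 * ε * θd * u)| ≤ 4 * |θd| * cb ^ 3 * ε ^ 3 := by
    rw [abs_neg, abs_mul, abs_mul, abs_mul, abs_of_pos hε0]
    have : |(2:ℝ)| = 2 := by norm_num
    rw [this]
    calc 2 * ε * |θd| * |u| ≤ 2 * ε * |θd| * (2 * cb ^ 3 * ε ^ 3) := by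
          apply mul_le_mul_of_nonneg_left hu (by positivity)
      _ = 4 * |θd| * cb ^ 3 * ε ^ 4 := by ring
      _ ≤ 4 * |θd| * cb ^ 3 * ε ^ 3 := by
          apply mul_le_mul_of_nonneg_left hε4 (by positivity)
  have h2 : |4 * ε ^ 2 * θd * Ld * (C ε) ^ 2| ≤ 4 * |θd| * Ld * cb ^ 2 * ε ^ 3 := by
    rw [abs_mul, abs_mul, abs_mul, abs_mul, abs_of_pos (pow_pos hε0 2), abs_of_pos hLd,
      abs_of_nonneg (sq_nonneg (C ε))]
    have : |(4:ℝ)| = 4 := by norm_num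
    rw [this]
    calc 4 * ε ^ 2 * |θd| * Ld * (C ε) ^ 2 ≤ 4 * ε ^ 2 * |θd| * Ld * (cb ^ 2 * ε ^ 2) := by
          apply mul_le_mul_of_nonneg_left hC2 (by positivity)
      _ = 4 * |θd| * Ld * cb ^ 2 * ε ^ 4 := by ring
      _ ≤ 4 * |θd| * Ld * cb ^ 2 * ε ^ 3 := by
          apply mul_le_mul_of_nonneg_left hε4 (by positivity)
  have h3 : |2 * ε ^ 2 * Real.sin α * (Real.pi * (b * ε + u) - (b * ε + u) ^ 2)|
      ≤ (2 * Real.pi * c + 2 * c ^ 2) * ε ^ 3 := by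
    rw [abs_mul, abs_mul, abs_mul, abs_of_pos (pow_pos hε0 2)]
    have h4 : |(2:ℝ)| = 2 := by norm_num
    rw [h4]
    have hvv : |Real.pi * (b * ε + u) - (b * ε + u) ^ 2|
        ≤ Real.pi * (c * ε) + (c * ε) ^ 2 := by
      calc |Real.pi * (b * ε + u) - (b * ε + u) ^ 2|
          ≤ |Real.pi * (b * ε + u)| + |(b * ε + u) ^ 2| := abs_sub _ _
        _ = Real.pi * |b * ε + u| + |b * ε + u| ^ 2 := by
            rw [abs_mul, abs_of_pos Real.pi_pos, abs_pow]
        _ ≤ Real.pi * (c * ε) + (c * ε) ^ 2 := by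
            have h5 := pow_le_pow_left₀ (abs_nonneg (b * ε + u)) hv 2
            linarith [mul_le_mul_of_nonneg_left hv Real.pi_pos.le]
    calc 2 * ε ^ 2 * |Real.sin α| * |Real.pi * (b * ε + u) - (b * ε + u) ^ 2|
        ≤ 2 * ε ^ 2 * 1 * (Real.pi * (c * ε) + (c * ε) ^ 2) := by
          apply mul_le_mul (by linarith [mul_nonneg (sq_nonneg ε) (sub_nonneg.2 hsin)]) hvv
            (abs_nonneg _) (by positivity)
      _ = 2 * Real.pi * c * ε ^ 3 + 2 * c ^ 2 * ε ^ 4 := by ring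
      _ ≤ (2 * Real.pi * c + 2 * c ^ 2) * ε ^ 3 := by
          linarith [mul_le_mul_of_nonneg_left hε4 (by positivity : (0:ℝ) ≤ 2 * c ^ 2)]
  rw [Real.norm_eq_abs, Real.norm_eq_abs, hiden, abs_of_pos (pow_pos hε0 3)]
  calc |-(2 * ε * θd * u) - 4 * ε ^ 2 * θd * Ld * (C ε) ^ 2
        + 2 * ε ^ 2 * Real.sin α * (Real.pi * (b * ε + u) - (b * ε + u) ^ 2)|
      ≤ |-(2 * ε * θd * u) - 4 * ε ^ 2 * θd * Ld * (C ε) ^ 2|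
        + |2 * ε ^ 2 * Real.sin α * (Real.pi * (b * ε + u) - (b * ε + u) ^ 2)| := abs_add_le _ _
    _ ≤ |-(2 * ε * θd * u)| + |4 * ε ^ 2 * θd * Ld * (C ε) ^ 2|
        + |2 * ε ^ 2 * Real.sin α * (Real.pi * (b * ε + u) - (b * ε + u) ^ 2)| := by
          linarith [abs_sub (-(2 * ε * θd * u)) (4 * ε ^ 2 * θd * Ld * (C ε) ^ 2)]
    _ ≤ M * ε ^ 3 := by rw [hM]; linarith
end

section
/- (Existence of symmetric solutions.) Let α ∈ (0, π/2), θ_d* > 0, and E_s > θ_d*²/(2cos²α) + cos α. Set L_d* = √(2E_s − θ_d*² − 2cos α) and Y* = cos α + (1/2)(θ_d* sin α − L_d* cos α)². Then cos α ≤ Y* ≤ E_s and the touch-down map at apex height Y* returns exactly (θ_d*, L_d*): θ_d* = √2·[cos α·√(E_s − Y*) − sin α·√(Y* − cos α)] and L_d* = √2·[sin α·√(E_s − Y*) + cos α·√(Y* − cos α)]. -/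
open Real

set_option maxHeartbeats 2000000

/-- Existence of symmetric solutions: above the minimum energy, the apex height `Y*`
lies between the landing height and the system energy, and the touch-down map at `Y*`
returns exactly the prescribed touch-down state `(θ_d*, L_d*)`. -/
theorem existence_symmetric_solutions
    (α θd Es : ℝ)
    (hα : α ∈ Set.Ioo 0 (Real.pi / 2)) (hθd : 0 < θd)
    (hE : Es > θd ^ 2 / (2 * (Real.cos α) ^ 2) + Real.cos α)
    (Ld Y : ℝ)
    (hLd : Ld = Real.sqrt (2 * Es - θd ^ 2 - 2 * Real.cos α))
    (hY : Y = Real.cos α + (1 / 2) * (θd * Real.sin α - Ld * Real.cos α) ^ 2) :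
    Real.cos α ≤ Y ∧ Y ≤ Es ∧
      θd = Real.sqrt 2 * (Real.cos α * Real.sqrt (Es - Y)
          - Real.sin α * Real.sqrt (Y - Real.cos α)) ∧
      Ld = Real.sqrt 2 * (Real.sin α * Real.sqrt (Es - Y)
          + Real.cos α * Real.sqrt (Y - Real.cos α)) := by
  obtain ⟨hα0, hα1⟩ := hα
  have hc : 0 < Real.cos α := Real.cos_pos_of_mem_Ioo ⟨by linarith [Real.pi_pos], hα1⟩
  have hs : 0 < Real.sin α := Real.sin_pos_of_pos_of_lt_pi hα0 (by linarith [Real.pi_pos])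
  have hpyth : Real.sin α ^ 2 + Real.cos α ^ 2 = 1 := Real.sin_sq_add_cos_sq α
  have harg : 0 < 2 * Es - θd ^ 2 - 2 * Real.cos α := by
    have h := hE
    rw [gt_iff_lt, div_add' _ _ _ (by positivity), div_lt_iff₀ (by positivity)] at h
    nlinarith [sq_nonneg θd, sq_nonneg (Real.sin α)]
  have hLd0 : 0 ≤ Ld := hLd ▸ Real.sqrt_nonneg _
  have hLdsq : Ld ^ 2 = 2 * Es - θd ^ 2 - 2 * Real.cos α := by
    rw [hLd, sq_sqrt harg.le]
  have hkey : θd * Real.sin α < Ld * Real.cos α := by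
    have hsq : (θd * Real.sin α) ^ 2 < (Ld * Real.cos α) ^ 2 := by
      have h := hE
      rw [gt_iff_lt, div_add' _ _ _ (by positivity), div_lt_iff₀ (by positivity)] at h
      nlinarith
    exact lt_of_pow_lt_pow_left₀ 2 (by positivity) hsq
  have hs2 : Real.sqrt 2 ≠ 0 := by positivity
  have hs2sq : Real.sqrt 2 ^ 2 = 2 := Real.sq_sqrt (by norm_num)
  have hEY : Es - Y = ((θd * Real.cos α + Ld * Real.sin α) / Real.sqrt 2) ^ 2 := by
    field_simp [hs2sq]
    nlinarith [hY, hLdsq, hpyth]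
  have hYc : Y - Real.cos α = ((Ld * Real.cos α - θd * Real.sin α) / Real.sqrt 2) ^ 2 := by
    field_simp [hs2sq]
    nlinarith [hY]
  have hsEY : Real.sqrt (Es - Y) = (θd * Real.cos α + Ld * Real.sin α) / Real.sqrt 2 := by
    rw [hEY]
    exact Real.sqrt_sq (by positivity)
  have hsYc : Real.sqrt (Y - Real.cos α) = (Ld * Real.cos α - θd * Real.sin α) / Real.sqrt 2 := by
    rw [hYc]
    exact Real.sqrt_sq (div_nonneg (by linarith [hkey]) (Real.sqrt_nonneg 2))
  refine ⟨by nlinarith [sq_nonneg (θd * Real.sin α - Ld * Real.cos α)],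
    by nlinarith [sq_nonneg ((θd * Real.cos α + Ld * Real.sin α) / Real.sqrt 2)], ?_, ?_⟩
  · rw [hsEY, hsYc]
    field_simp
    linear_combination (-θd) * hpyth
  · rw [hsEY, hsYc]
    field_simp
    linear_combination (-Ld) * hpyth
end

section
/- Let α ∈ (0, π/2), E_s ∈ ℝ, Y* ∈ ℝ with cos α < Y* < E_s, and let Δθ : ℝ → ℝ satisfy Δθ(Y*) = 2α and have derivative d at Y*. Define f(Y) = cos(α − Δθ(Y)) + [sin(2α − Δθ(Y))·√(E_s − Y) + cos(2α − Δθ(Y))·√(Y − cos α)]². Then f is differentiable at Y* with f'(Y*) = 1 − [sin α + 2√((Y* − cos α)(E_s − Y*))]·d. -/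
open Real

/-- Derivative of the apex return map at a symmetric fixed point. -/
theorem apex_return_map_deriv
    (α Es Y d : ℝ) (Δθ : ℝ → ℝ)
    (hα : α ∈ Set.Ioo 0 (Real.pi / 2))
    (hY₁ : Real.cos α < Y) (hY₂ : Y < Es)
    (hΔθY : Δθ Y = 2 * α)
    (hd : HasDerivAt Δθ d Y) :
    HasDerivAt
      (fun Z => Real.cos (α - Δθ Z)
        + (Real.sin (2 * α - Δθ Z) * Real.sqrt (Es - Z)
           + Real.cos (2 * α - Δθ Z) * Real.sqrt (Z - Real.cos α)) ^ 2)
      (1 - (Real.sin α + 2 * Real.sqrt ((Y - Real.cos α) * (Es - Y))) * d) Y := by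
  have hEs : (0:ℝ) < Es - Y := by linarith
  have hYc : (0:ℝ) < Y - Real.cos α := by linarith
  -- inner argument derivatives
  have hu : HasDerivAt (fun Z => 2 * α - Δθ Z) (-d) Y := by
    simpa using hd.const_sub (2 * α)
  have hv : HasDerivAt (fun Z => α - Δθ Z) (-d) Y := by
    simpa using hd.const_sub α
  have hEsZ : HasDerivAt (fun Z => Es - Z) (-1 : ℝ) Y := by
    simpa using (hasDerivAt_id Y).const_sub Es
  have hYcZ : HasDerivAt (fun Z => Z - Real.cos α) (1 : ℝ) Y := by
    simpa using (hasDerivAt_id Y).sub_const (Real.cos α)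
  have hs1 : HasDerivAt (fun Z => Real.sqrt (Es - Z))
      (1 / (2 * Real.sqrt (Es - Y)) * (-1)) Y :=
    (Real.hasDerivAt_sqrt (ne_of_gt hEs)).comp Y hEsZ
  have hs2 : HasDerivAt (fun Z => Real.sqrt (Z - Real.cos α))
      (1 / (2 * Real.sqrt (Y - Real.cos α)) * 1) Y :=
    (Real.hasDerivAt_sqrt (ne_of_gt hYc)).comp Y hYcZ
  have hsin : HasDerivAt (fun Z => Real.sin (2 * α - Δθ Z))
      (Real.cos (2 * α - Δθ Y) * (-d)) Y :=
    (Real.hasDerivAt_sin _).comp Y hu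
  have hcos : HasDerivAt (fun Z => Real.cos (2 * α - Δθ Z))
      (-Real.sin (2 * α - Δθ Y) * (-d)) Y :=
    (Real.hasDerivAt_cos _).comp Y hu
  have hcosv : HasDerivAt (fun Z => Real.cos (α - Δθ Z))
      (-Real.sin (α - Δθ Y) * (-d)) Y :=
    (Real.hasDerivAt_cos _).comp Y hv
  have hg := ((hsin.mul hs1).add (hcos.mul hs2)).pow 2
  have hf := hcosv.add hg
  convert hf using 1
  · rfl
  · rfl
  · rfl
  have h0 : 2 * α - Δθ Y = 0 := by rw [hΔθY]; ring
  have hα' : α - Δθ Y = -α := by rw [hΔθY]; ring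
  have hmul : Real.sqrt ((Y - Real.cos α) * (Es - Y))
      = Real.sqrt (Y - Real.cos α) * Real.sqrt (Es - Y) :=
    Real.sqrt_mul (le_of_lt hYc) _
  have hs2pos : (0:ℝ) < Real.sqrt (Y - Real.cos α) := Real.sqrt_pos.mpr hYc
  have hsq : Real.sqrt (Y - Real.cos α) * Real.sqrt (Y - Real.cos α)
      = Y - Real.cos α := Real.mul_self_sqrt (le_of_lt hYc)
  simp only [Pi.add_apply, Pi.mul_apply, Nat.cast_ofNat]
  rw [h0, hα'] -- simplify trig values
  simp only [Real.sin_zero, Real.cos_zero, Real.sin_neg]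
  rw [hmul]
  field_simp
  ring_nf
end

section
/- (Stability of symmetric solutions.) Let α ∈ (0, π/2), E_s ∈ ℝ, Y* ∈ ℝ with cos α < Y* < E_s, set D = 2√((Y* − cos α)(E_s − Y*)), and let Δθ : ℝ → ℝ satisfy Δθ(Y*) = 2α and have derivative d at Y*. Define the apex return map f(Y) = cos(α − Δθ(Y)) + [sin(2α − Δθ(Y))·√(E_s − Y) + cos(2α − Δθ(Y))·√(Y − cos α)]². If d ∈ (0, 2/(sin α + D)), then Y* is a fixed point of f, f is differentiable at Y*, and |f'(Y*)| < 1, i.e., Y* is a stable fixed point. -/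
open Real

/-- Stability of symmetric solutions: if the derivative of the swept angle at the
symmetric fixed point lies in `(0, 2/(sin α + D))`, then `Y*` is a stable fixed point
of the apex return map. -/
theorem stability_symmetric_solutions
    (α Es Y d : ℝ) (Δθ : ℝ → ℝ)
    (hα : α ∈ Set.Ioo 0 (Real.pi / 2))
    (hY₁ : Real.cos α < Y) (hY₂ : Y < Es)
    (D : ℝ) (hD : D = 2 * Real.sqrt ((Y - Real.cos α) * (Es - Y)))
    (hΔθY : Δθ Y = 2 * α)
    (hd : HasDerivAt Δθ d Y)
    (hdmem : d ∈ Set.Ioo 0 (2 / (Real.sin α + D)))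
    (f : ℝ → ℝ)
    (hf : ∀ Z, f Z = Real.cos (α - Δθ Z)
        + (Real.sin (2 * α - Δθ Z) * Real.sqrt (Es - Z)
           + Real.cos (2 * α - Δθ Z) * Real.sqrt (Z - Real.cos α)) ^ 2) :
    f Y = Y ∧ DifferentiableAt ℝ f Y ∧ |deriv f Y| < 1 := by
  obtain ⟨hα0, hα2⟩ := hα
  obtain ⟨hd0, hd2⟩ := hdmem
  have hEs : (0:ℝ) < Es - Y := by linarith
  have hYc : (0:ℝ) < Y - Real.cos α := by linarith
  set a := Real.sqrt (Es - Y) with ha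
  set b := Real.sqrt (Y - Real.cos α) with hb
  have ha0 : 0 < a := Real.sqrt_pos.mpr hEs
  have hb0 : 0 < b := Real.sqrt_pos.mpr hYc
  have hDab : D = 2 * (b * a) := by
    rw [hD, Real.sqrt_mul hYc.le]
  have h0 : 2 * α - Δθ Y = 0 := by rw [hΔθY]; ring
  have hm : α - Δθ Y = -α := by rw [hΔθY]; ring
  -- derivatives of the inner functions
  have h1 : HasDerivAt (fun Z : ℝ => Es - Z) (-1) Y := by
    simpa using (hasDerivAt_id Y).const_sub Es
  have h2 : HasDerivAt (fun Z : ℝ => Z - Real.cos α) 1 Y :=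
    (hasDerivAt_id Y).sub_const _
  have hsa : HasDerivAt (fun Z : ℝ => Real.sqrt (Es - Z)) (1 / (2 * a) * (-1)) Y :=
    (Real.hasDerivAt_sqrt hEs.ne').comp Y h1
  have hsb : HasDerivAt (fun Z : ℝ => Real.sqrt (Z - Real.cos α)) (1 / (2 * b) * 1) Y :=
    (Real.hasDerivAt_sqrt hYc.ne').comp Y h2
  have hΔ2 : HasDerivAt (fun Z => 2 * α - Δθ Z) (-d) Y := by
    simpa using hd.const_sub (2 * α)
  have hΔ1 : HasDerivAt (fun Z => α - Δθ Z) (-d) Y := by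
    simpa using hd.const_sub α
  have hsin : HasDerivAt (fun Z => Real.sin (2 * α - Δθ Z)) (-d) Y := by
    have := (Real.hasDerivAt_sin (2 * α - Δθ Y)).comp Y hΔ2
    simpa [h0, Function.comp_def] using this
  have hcos : HasDerivAt (fun Z => Real.cos (2 * α - Δθ Z)) 0 Y := by
    have := (Real.hasDerivAt_cos (2 * α - Δθ Y)).comp Y hΔ2
    simpa [h0, Function.comp_def] using this
  have hcos1 : HasDerivAt (fun Z => Real.cos (α - Δθ Z)) (-(Real.sin α * d)) Y := by
    have := (Real.hasDerivAt_cos (α - Δθ Y)).comp Y hΔ1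
    simpa [hm, Function.comp_def] using this
  -- the inner sum g
  have hg : HasDerivAt
      (fun Z => Real.sin (2 * α - Δθ Z) * Real.sqrt (Es - Z)
        + Real.cos (2 * α - Δθ Z) * Real.sqrt (Z - Real.cos α))
      ((-d) * a + Real.sin (2 * α - Δθ Y) * (1 / (2 * a) * (-1))
        + (0 * b + Real.cos (2 * α - Δθ Y) * (1 / (2 * b) * 1))) Y :=
    (hsin.mul hsa).add (hcos.mul hsb)
  have hgval : Real.sin (2 * α - Δθ Y) * a + Real.cos (2 * α - Δθ Y) * b = b := by
    simp [h0]
  have hg' : ((-d) * a + Real.sin (2 * α - Δθ Y) * (1 / (2 * a) * (-1))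
        + (0 * b + Real.cos (2 * α - Δθ Y) * (1 / (2 * b) * 1)))
      = -d * a + 1 / (2 * b) := by
    simp [h0]
  rw [hg'] at hg
  have hF : HasDerivAt f (1 - d * (Real.sin α + D)) Y := by
    have hFe : HasDerivAt f
        (-(Real.sin α * d) + 2 * (Real.sin (2 * α - Δθ Y) * a
          + Real.cos (2 * α - Δθ Y) * b) ^ (2 - 1) * (-d * a + 1 / (2 * b))) Y := by
      have heq : f = fun Z => Real.cos (α - Δθ Z)
          + (Real.sin (2 * α - Δθ Z) * Real.sqrt (Es - Z)
            + Real.cos (2 * α - Δθ Z) * Real.sqrt (Z - Real.cos α)) ^ 2 :=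
        funext hf
      rw [heq]
      exact hcos1.add (hg.pow 2)
    convert hFe using 1
    rw [hgval, hDab]
    field_simp
    ring
  have hfix : f Y = Y := by
    have hbsq : b ^ 2 = Y - Real.cos α := Real.sq_sqrt hYc.le
    rw [hf Y, h0, hm]
    simp [hbsq]; try linarith [hbsq]
  refine ⟨hfix, hF.differentiableAt, ?_⟩
  rw [hF.deriv]
  have hsinpos : 0 < Real.sin α := Real.sin_pos_of_pos_of_lt_pi hα0 (by linarith [Real.pi_pos])
  have hDpos : 0 < D := by rw [hDab]; positivity
  have hsum : 0 < Real.sin α + D := by linarith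
  have hlt2 : d * (Real.sin α + D) < 2 := by
    rw [div_eq_mul_inv] at hd2
    calc d * (Real.sin α + D) < 2 * (Real.sin α + D)⁻¹ * (Real.sin α + D) := by
          exact mul_lt_mul_of_pos_right hd2 hsum
      _ = 2 := by field_simp
  have hgt0 : 0 < d * (Real.sin α + D) := mul_pos hd0 hsum
  rw [abs_lt]
  constructor <;> linarith
end

section
/- Let α ∈ (0, π/2), θ_d* > 0, and E_s > θ_d*²/(2cos²α) + cos α. Set L_d* = √(2E_s − θ_d*² − 2cos α) and Y* = cos α + (1/2)(θ_d* sin α − L_d* cos α)². Then 2√((Y* − cos α)(E_s − Y*)) = θ_d*·cos(2α)·√(2E_s − θ_d*² − 2cos α) + sin(2α)·(E_s − θ_d*² − cos α). -/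
open Real

/-- Closed form of the quantity `D(α, E_s, θ_d*) = 2√((Y* − cos α)(E_s − Y*))`
appearing in the stability condition. -/
theorem stability_D_formula
    (α θd Es : ℝ)
    (hα : α ∈ Set.Ioo 0 (Real.pi / 2)) (hθd : 0 < θd)
    (hE : Es > θd ^ 2 / (2 * (Real.cos α) ^ 2) + Real.cos α)
    (Ld Y : ℝ)
    (hLd : Ld = Real.sqrt (2 * Es - θd ^ 2 - 2 * Real.cos α))
    (hY : Y = Real.cos α + (1 / 2) * (θd * Real.sin α - Ld * Real.cos α) ^ 2) :
    2 * Real.sqrt ((Y - Real.cos α) * (Es - Y))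
      = θd * Real.cos (2 * α) * Real.sqrt (2 * Es - θd ^ 2 - 2 * Real.cos α)
        + Real.sin (2 * α) * (Es - θd ^ 2 - Real.cos α) := by
  obtain ⟨hα0, hα1⟩ := hα
  have hc : 0 < Real.cos α := Real.cos_pos_of_mem_Ioo ⟨by linarith [Real.pi_pos], hα1⟩
  have hs : 0 < Real.sin α := Real.sin_pos_of_pos_of_lt_pi hα0 (by linarith [Real.pi_pos])
  have hsc : Real.sin α ^ 2 + Real.cos α ^ 2 = 1 := Real.sin_sq_add_cos_sq α
  have hE' : θd ^ 2 < (Es - Real.cos α) * (2 * Real.cos α ^ 2) := by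
    rw [← div_lt_iff₀ (by positivity)]; linarith
  have h1 : θd ^ 2 * Real.sin α ^ 2 < (2 * Es - θd ^ 2 - 2 * Real.cos α) * Real.cos α ^ 2 := by
    nlinarith [hE', hsc]
  have hnn : 0 ≤ 2 * Es - θd ^ 2 - 2 * Real.cos α := by
    nlinarith [h1, sq_nonneg θd, mul_pos hs hs, sq_nonneg (Real.sin α), hc]
  have hLd0 : 0 ≤ Ld := hLd ▸ Real.sqrt_nonneg _
  have hL2 : Ld ^ 2 = 2 * Es - θd ^ 2 - 2 * Real.cos α := by
    rw [hLd]; exact Real.sq_sqrt hnn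
  -- Ld c > θd s
  have hLc : θd * Real.sin α ≤ Ld * Real.cos α := by
    nlinarith [mul_pos hθd hs, mul_nonneg hLd0 hc.le, h1, hL2]
  have hEs : Es = (Ld ^ 2 + θd ^ 2) / 2 + Real.cos α := by linarith
  have hprod : (Y - Real.cos α) * (Es - Y)
      = ((Ld * Real.cos α - θd * Real.sin α) * (Ld * Real.sin α + θd * Real.cos α) / 2) ^ 2 := by
    rw [hY, hEs]
    linear_combination (-(θd * Real.sin α - Ld * Real.cos α) ^ 2 * (Ld ^ 2 + θd ^ 2) / 4) * hsc
  have hfac : 0 ≤ (Ld * Real.cos α - θd * Real.sin α) * (Ld * Real.sin α + θd * Real.cos α) / 2 := by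
    have h2 : 0 ≤ Ld * Real.sin α + θd * Real.cos α := by positivity
    have h3 : 0 ≤ Ld * Real.cos α - θd * Real.sin α := by linarith
    positivity
  rw [hprod, Real.sqrt_sq hfac, ← hLd, Real.cos_two_mul, Real.sin_two_mul, hEs]
  linear_combination (-θd * Ld) * hsc
end
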